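/- Let a, b ∈ ℂ and define the 2×2 matrices K⁺ := [[0,0],[a,b]] and K⁻ := [[b,a],[0,0]]. For N ≥ 1, let I_N be the 2N×2N block tridiagonal matrix with zero diagonal blocks, superdiagonal blocks K⁺ and subdiagonal blocks K⁻. If a = 0, then I_N^N = 0 (the iteration matrix is nilpotent of index at most N). -/
import Mathlib


open Matrix

/-- The `2N × 2N` block tridiagonal Schwarz iteration matrix with zero diagonal blocks,
superdiagonal blocks `K⁺ = [[0,0],[a,b]]` and subdiagonal blocks `K⁻ = [[b,a],[0,0]]`. -/
noncomputable def schwarzIter (N : ℕ) (a b : ℂ) :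
    Matrix (Fin N × Fin 2) (Fin N × Fin 2) ℂ := fun p q =>
  if (q.1 : ℕ) = (p.1 : ℕ) + 1 then (Matrix.of ![![(0 : ℂ), 0], ![a, b]]) p.2 q.2
  else if (q.1 : ℕ) + 1 = (p.1 : ℕ) then (Matrix.of ![![b, (a : ℂ)], ![0, 0]]) p.2 q.2
  else 0

/-- Auxiliary weight that strictly decreases along nonzero entries when `a = 0`. -/
def schwarzWeight (N : ℕ) (p : Fin N × Fin 2) : ℕ :=
  if p.2 = 0 then (p.1 : ℕ) else N - 1 - (p.1 : ℕ)

theorem schwarzIter_nilpotent (N : ℕ) (hN : 1 ≤ N) (b : ℂ) :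
    schwarzIter N 0 b ^ N = 0 := by
  have key : ∀ p r : Fin N × Fin 2, schwarzIter N 0 b p r ≠ 0 →
      schwarzWeight N r < schwarzWeight N p := by
    rintro ⟨i, s⟩ ⟨j, t⟩ h
    have hi := i.isLt
    have hj := j.isLt
    unfold schwarzIter at h
    by_cases h1 : (j : ℕ) = (i : ℕ) + 1
    · rw [if_pos h1] at h
      fin_cases s <;> fin_cases t <;> simp_all [schwarzWeight] <;> omega
    · rw [if_neg h1] at h
      by_cases h2 : (j : ℕ) + 1 = (i : ℕ)
      · rw [if_pos h2] at h
        fin_cases s <;> fin_cases t <;> simp_all [schwarzWeight] <;> omega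
      · rw [if_neg h2] at h
        exact absurd rfl h
  have main : ∀ k, ∀ p q : Fin N × Fin 2,
      schwarzWeight N p < schwarzWeight N q + k → (schwarzIter N 0 b ^ k) p q = 0 := by
    intro k
    induction k with
    | zero =>
      intro p q hpq
      rw [pow_zero, Matrix.one_apply, if_neg]
      rintro rfl; omega
    | succ k ih =>
      intro p q hpq
      rw [pow_succ', Matrix.mul_apply]
      apply Finset.sum_eq_zero
      intro r _
      by_cases h : schwarzIter N 0 b p r = 0
      · simp [h]
      · rw [ih r q (by have := key p r h; omega), mul_zero]
  ext p q
  rw [Matrix.zero_apply]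
  apply main
  have hp := p.1.isLt
  have : schwarzWeight N p ≤ N - 1 := by
    rcases p with ⟨i, s⟩
    fin_cases s <;> simp [schwarzWeight] <;> omega
  omega
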